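/- Let A be a fixed n × n real diagonal matrix with diagonal entries a₁₁, …, aₙₙ satisfying Σᵢ aᵢᵢ² = n, and let M be a random matrix in the orthogonal group O(n) distributed according to Haar probability measure. Then E[tr((AM)²)] = 1. -/

import Mathlib

open MeasureTheory ProbabilityTheory Matrix

noncomputable instance {n : ℕ} : MeasurableSpace (Matrix.orthogonalGroup (Fin n) ℝ) :=
  borel _

instance {n : ℕ} : BorelSpace (Matrix.orthogonalGroup (Fin n) ℝ) := ⟨rfl⟩

namespace HaarOrthAux

variable {n : ℕ}

lemma cont_entry (i j : Fin n) :
    Continuous fun M : Matrix.orthogonalGroup (Fin n) ℝ =>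
      (M : Matrix (Fin n) (Fin n) ℝ) i j := by
  have h1 : Continuous fun A : Matrix (Fin n) (Fin n) ℝ => A i := continuous_apply i
  have h2 : Continuous fun g : Fin n → ℝ => g j := continuous_apply j
  exact (h2.comp h1).comp continuous_subtype_val

lemma entry_abs_le (M : Matrix.orthogonalGroup (Fin n) ℝ) (i j : Fin n) :
    |(M : Matrix (Fin n) (Fin n) ℝ) i j| ≤ 1 := by
  have := entry_norm_bound_of_unitary (𝕜 := ℝ) M.2 i j
  simpa using this

lemma integrable_entry_mul (μ : Measure (Matrix.orthogonalGroup (Fin n) ℝ))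
    [IsFiniteMeasure μ] (i j k l : Fin n) :
    Integrable (fun M : Matrix.orthogonalGroup (Fin n) ℝ =>
      (M : Matrix (Fin n) (Fin n) ℝ) i j * (M : Matrix (Fin n) (Fin n) ℝ) k l) μ := by
  refine ⟨((cont_entry i j).mul (cont_entry k l)).aestronglyMeasurable, ?_⟩
  apply HasFiniteIntegral.of_bounded (C := 1)
  filter_upwards with M
  have h1 := entry_abs_le M i j
  have h2 := entry_abs_le M k l
  have h3 : |(M : Matrix (Fin n) (Fin n) ℝ) i j * (M : Matrix (Fin n) (Fin n) ℝ) k l| ≤ 1 := by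
    rw [abs_mul]
    calc |(M : Matrix (Fin n) (Fin n) ℝ) i j| * |(M : Matrix (Fin n) (Fin n) ℝ) k l|
        ≤ 1 * 1 := mul_le_mul h1 h2 (abs_nonneg _) zero_le_one
      _ = 1 := mul_one 1
  rw [Real.norm_eq_abs]; exact h3

lemma col_sq_sum (M : Matrix.orthogonalGroup (Fin n) ℝ) (i : Fin n) :
    ∑ k, (M : Matrix (Fin n) (Fin n) ℝ) k i * (M : Matrix (Fin n) (Fin n) ℝ) k i = 1 := by
  have h := M.2.1
  have h2 := congrArg (fun X : Matrix (Fin n) (Fin n) ℝ => X i i) h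
  simpa [Matrix.mul_apply, Matrix.star_apply, Matrix.one_apply] using h2

lemma int_offdiag (μ : Measure (Matrix.orthogonalGroup (Fin n) ℝ))
    [μ.IsHaarMeasure] {i j : Fin n} (hij : i ≠ j) :
    ∫ M : Matrix.orthogonalGroup (Fin n) ℝ,
      (M : Matrix (Fin n) (Fin n) ℝ) i j * (M : Matrix (Fin n) (Fin n) ℝ) j i ∂μ = 0 := by
  set d : Fin n → ℝ := fun k => if k = i then (-1 : ℝ) else 1 with hd
  have hmem : Matrix.diagonal d ∈ Matrix.orthogonalGroup (Fin n) ℝ := by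
    rw [Matrix.mem_orthogonalGroup_iff]
    have hstar : star (Matrix.diagonal d) = Matrix.diagonal d := by
      simp [Matrix.star_eq_conjTranspose, Matrix.diagonal_conjTranspose]
    rw [Matrix.diagonal_transpose, Matrix.diagonal_mul_diagonal]
    have : (fun k => d k * d k) = fun _ => (1 : ℝ) := by
      funext k; by_cases h : k = i <;> simp [hd, h]
    rw [this, Matrix.diagonal_one]
  set E : Matrix.orthogonalGroup (Fin n) ℝ := ⟨Matrix.diagonal d, hmem⟩
  have key := integral_mul_left_eq_self (μ := μ)
      (fun M : Matrix.orthogonalGroup (Fin n) ℝ =>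
        (M : Matrix (Fin n) (Fin n) ℝ) i j * (M : Matrix (Fin n) (Fin n) ℝ) j i) E
  have hflip : ∀ M : Matrix.orthogonalGroup (Fin n) ℝ,
      ((E * M : Matrix.orthogonalGroup (Fin n) ℝ) : Matrix (Fin n) (Fin n) ℝ) i j *
        ((E * M : Matrix.orthogonalGroup (Fin n) ℝ) : Matrix (Fin n) (Fin n) ℝ) j i
      = -((M : Matrix (Fin n) (Fin n) ℝ) i j * (M : Matrix (Fin n) (Fin n) ℝ) j i) := by
    intro M
    have hco : ((E * M : Matrix.orthogonalGroup (Fin n) ℝ) : Matrix (Fin n) (Fin n) ℝ)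
        = Matrix.diagonal d * (M : Matrix (Fin n) (Fin n) ℝ) := rfl
    rw [hco, Matrix.diagonal_mul, Matrix.diagonal_mul]
    have hdi : d i = -1 := by simp [hd]
    have hdj : d j = 1 := by simp [hd, hij.symm]
    rw [hdi, hdj]; ring
  simp only [hflip, integral_neg] at key
  linarith

lemma int_diag (μ : Measure (Matrix.orthogonalGroup (Fin n) ℝ))
    [μ.IsHaarMeasure] [IsProbabilityMeasure μ] (i : Fin n) :
    ∫ M : Matrix.orthogonalGroup (Fin n) ℝ,
      (M : Matrix (Fin n) (Fin n) ℝ) i i * (M : Matrix (Fin n) (Fin n) ℝ) i i ∂μ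
      = 1 / n := by
  have hperm : ∀ k : Fin n,
      ∫ M : Matrix.orthogonalGroup (Fin n) ℝ,
        (M : Matrix (Fin n) (Fin n) ℝ) k i * (M : Matrix (Fin n) (Fin n) ℝ) k i ∂μ
      = ∫ M : Matrix.orthogonalGroup (Fin n) ℝ,
        (M : Matrix (Fin n) (Fin n) ℝ) i i * (M : Matrix (Fin n) (Fin n) ℝ) i i ∂μ := by
    intro k
    set σ := Equiv.swap i k with hσ
    have hmem : σ.permMatrix ℝ ∈ Matrix.orthogonalGroup (Fin n) ℝ := by
      rw [Matrix.mem_orthogonalGroup_iff]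
      ext a b
      simp only [Matrix.mul_apply, Matrix.star_apply, PEquiv.toMatrix_apply,
        Equiv.toPEquiv_apply, Option.mem_some_iff, Equiv.Perm.permMatrix, star_trivial,
        mul_ite, ite_mul, one_mul, mul_one, mul_zero, zero_mul, Matrix.one_apply]
      rw [Finset.sum_ite_eq]
      by_cases h : a = b
      · simp [h]
      · have hne : ¬ σ a = σ b := fun hh => h (σ.injective hh)
        simp [h, hne, Ne.symm h]
    set P : Matrix.orthogonalGroup (Fin n) ℝ := ⟨σ.permMatrix ℝ, hmem⟩
    have key := integral_mul_left_eq_self (μ := μ)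
        (fun M : Matrix.orthogonalGroup (Fin n) ℝ =>
          (M : Matrix (Fin n) (Fin n) ℝ) i i * (M : Matrix (Fin n) (Fin n) ℝ) i i) P
    have he : ∀ M : Matrix.orthogonalGroup (Fin n) ℝ,
        ((P * M : Matrix.orthogonalGroup (Fin n) ℝ) : Matrix (Fin n) (Fin n) ℝ) i i *
          ((P * M : Matrix.orthogonalGroup (Fin n) ℝ) : Matrix (Fin n) (Fin n) ℝ) i i
        = (M : Matrix (Fin n) (Fin n) ℝ) k i * (M : Matrix (Fin n) (Fin n) ℝ) k i := by
      intro M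
      have hco : ((P * M : Matrix.orthogonalGroup (Fin n) ℝ) : Matrix (Fin n) (Fin n) ℝ)
          = σ.permMatrix ℝ * (M : Matrix (Fin n) (Fin n) ℝ) := rfl
      rw [hco, PEquiv.toMatrix_toPEquiv_mul]
      simp [Matrix.submatrix_apply, hσ, Equiv.swap_apply_left]
    simp only [he] at key
    exact key
  have hsum : ∑ k : Fin n,
      ∫ M : Matrix.orthogonalGroup (Fin n) ℝ,
        (M : Matrix (Fin n) (Fin n) ℝ) k i * (M : Matrix (Fin n) (Fin n) ℝ) k i ∂μ = 1 := by
    rw [← integral_finset_sum _ (fun k _ => integrable_entry_mul μ k i k i)]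
    simp only [col_sq_sum]
    simp
  rw [Finset.sum_congr rfl fun k _ => hperm k, Finset.sum_const, Finset.card_univ,
    Fintype.card_fin, nsmul_eq_mul] at hsum
  have hn : (n : ℝ) ≠ 0 := Nat.cast_ne_zero.mpr i.pos.ne'
  field_simp
  simp only [← pow_two] at hsum
  linarith

end HaarOrthAux

/-- For `A` real diagonal with `Σᵢ aᵢᵢ² = n` and `M` Haar-distributed on `O(n)`,
`E[tr((AM)²)] = 1`. -/
theorem haar_orthogonal_trace_sq_mean (n : ℕ) (hn : 0 < n)
    (a : Fin n → ℝ) (ha : ∑ i, (a i) ^ 2 = (n : ℝ))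
    (μ : Measure (Matrix.orthogonalGroup (Fin n) ℝ))
    [μ.IsHaarMeasure] [IsProbabilityMeasure μ] :
    ∫ M : Matrix.orthogonalGroup (Fin n) ℝ,
        ((Matrix.diagonal a * (M : Matrix (Fin n) (Fin n) ℝ)) *
          (Matrix.diagonal a * (M : Matrix (Fin n) (Fin n) ℝ))).trace ∂μ = 1 := by
  have htr : ∀ M : Matrix.orthogonalGroup (Fin n) ℝ,
      ((Matrix.diagonal a * (M : Matrix (Fin n) (Fin n) ℝ)) *
        (Matrix.diagonal a * (M : Matrix (Fin n) (Fin n) ℝ))).trace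
      = ∑ i, ∑ j, (a i * a j) *
          ((M : Matrix (Fin n) (Fin n) ℝ) i j * (M : Matrix (Fin n) (Fin n) ℝ) j i) := by
    intro M
    simp only [Matrix.trace, Matrix.diag_apply, Matrix.mul_apply, Matrix.diagonal_apply,
      ite_mul, zero_mul, Finset.sum_ite_eq, Finset.mem_univ, if_true]
    refine Finset.sum_congr rfl fun i _ => Finset.sum_congr rfl fun j _ => by ring
  simp only [htr]
  rw [integral_finset_sum _ (fun i _ => integrable_finset_sum _
    (fun j _ => (HaarOrthAux.integrable_entry_mul μ i j j i).const_mul (a i * a j)))]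
  have hswap : ∀ i : Fin n,
      ∫ M : Matrix.orthogonalGroup (Fin n) ℝ,
        ∑ j, (a i * a j) *
          ((M : Matrix (Fin n) (Fin n) ℝ) i j * (M : Matrix (Fin n) (Fin n) ℝ) j i) ∂μ
      = (a i)^2 * (1 / n) := by
    intro i
    rw [integral_finset_sum _
      (fun j _ => (HaarOrthAux.integrable_entry_mul μ i j j i).const_mul (a i * a j))]
    rw [Finset.sum_eq_single i]
    · rw [MeasureTheory.integral_const_mul, HaarOrthAux.int_diag μ i]
      ring
    · intro j _ hji
      rw [MeasureTheory.integral_const_mul,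
        HaarOrthAux.int_offdiag μ (fun he2 => hji he2.symm), mul_zero]
    · intro hmem
      exact absurd (Finset.mem_univ i) hmem
  simp only [hswap]
  rw [← Finset.sum_mul, ha]
  have hn' : (n : ℝ) ≠ 0 := by exact_mod_cast hn.ne'
  field_simp
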